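/- Let N ≥ 1, M ≥ 1 be integers and ρ ∈ [0,1), σ > 0. Define the OP upper bound P̃(γ) = (1/(N−1)!)·γ_inc(N, γ)·(1 − exp(−2γ/(σ²(1−ρ²))))^{M−1}, where γ_inc is the lower incomplete gamma function. Then lim_{γ→0⁺} log P̃(γ)/log γ = N + M − 1. -/

import Mathlib

open Filter

/-- Diversity order of the MISO-FAS model: for the OP upper bound
`P̃(γ) = (1/(N-1)!) γ_inc(N, γ) (1 - exp(-2γ/(σ²(1-ρ²))))^{M-1}`,
one has `lim_{γ→0⁺} log P̃(γ) / log γ = N + M - 1`. -/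
theorem miso_fas_diversity_order
    (N M : ℕ) (hN : 1 ≤ N) (hM : 1 ≤ M) (ρ σ : ℝ)
    (hρ : ρ ∈ Set.Ico (0:ℝ) 1) (hσ : 0 < σ) :
    Tendsto (fun γ : ℝ =>
        Real.log ((1 / (Nat.factorial (N - 1) : ℝ)) *
            (∫ t in (0:ℝ)..γ, t ^ (N - 1) * Real.exp (-t)) *
            (1 - Real.exp (-(2 * γ / (σ ^ 2 * (1 - ρ ^ 2))))) ^ (M - 1)) /
          Real.log γ)
      (nhdsWithin 0 (Set.Ioi 0)) (nhds ((N : ℝ) + M - 1)) := by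
  obtain ⟨hρ0, hρ1⟩ := hρ
  have hρ2 : ρ ^ 2 < 1 := by nlinarith
  have hD : 0 < σ ^ 2 * (1 - ρ ^ 2) := mul_pos (pow_pos hσ 2) (by nlinarith)
  set a : ℝ := 2 / (σ ^ 2 * (1 - ρ ^ 2)) with ha_def
  have ha : 0 < a := by positivity
  set C : ℝ := 1 / (Nat.factorial (N - 1) : ℝ) with hC_def
  have hC : 0 < C := by positivity
  set J : ℝ → ℝ := fun γ => ∫ t in (0:ℝ)..γ, t ^ (N - 1) * Real.exp (-t) with hJ_def
  set B : ℝ → ℝ := fun γ => 1 - Real.exp (-(a * γ)) with hB_def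
  have hNpos : (0:ℝ) < N := by exact_mod_cast hN
  -- rewrite the exponential argument
  have harg : ∀ γ : ℝ, -(2 * γ / (σ ^ 2 * (1 - ρ ^ 2))) = -(a * γ) := by
    intro γ; rw [ha_def]; ring
  -- bounds on J
  have hint : ∀ γ : ℝ, IntervalIntegrable (fun t => t ^ (N - 1) * Real.exp (-t))
      MeasureTheory.volume 0 γ := fun γ =>
    (Continuous.intervalIntegrable (by continuity) 0 γ)
  have hJle : ∀ γ ∈ Set.Ioi (0:ℝ), J γ ≤ γ ^ N / N := by
    intro γ hγ
    have h1 : J γ ≤ ∫ t in (0:ℝ)..γ, t ^ (N - 1) := by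
      apply intervalIntegral.integral_mono_on (le_of_lt hγ) (hint γ)
        (Continuous.intervalIntegrable (by continuity) 0 γ)
      intro t ht
      have ht0 : 0 ≤ t := ht.1
      nlinarith [Real.exp_le_one_iff.mpr (neg_nonpos.mpr ht0),
        pow_nonneg ht0 (N - 1), Real.exp_pos (-t)]
    have h2 : (∫ t in (0:ℝ)..γ, t ^ (N - 1)) = γ ^ N / N := by
      rw [integral_pow]
      have hn : N - 1 + 1 = N := Nat.succ_pred_eq_of_pos hN
      have hc : ((N - 1 : ℕ) : ℝ) + 1 = N := by
        push_cast [Nat.cast_sub hN]; ring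
      rw [hn, hc, zero_pow (by omega : N ≠ 0)]
      ring
    linarith [h1, h2.le, h2.ge]
  have hJge : ∀ γ ∈ Set.Ioi (0:ℝ), Real.exp (-γ) * (γ ^ N / N) ≤ J γ := by
    intro γ hγ
    have h1 : (∫ t in (0:ℝ)..γ, Real.exp (-γ) * t ^ (N - 1)) ≤ J γ := by
      apply intervalIntegral.integral_mono_on (le_of_lt hγ)
        (Continuous.intervalIntegrable (by continuity) 0 γ) (hint γ)
      intro t ht
      have ht0 : 0 ≤ t := ht.1
      have : Real.exp (-γ) ≤ Real.exp (-t) := Real.exp_le_exp.mpr (by linarith [ht.2])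
      nlinarith [pow_nonneg ht0 (N - 1)]
    have h2 : (∫ t in (0:ℝ)..γ, Real.exp (-γ) * t ^ (N - 1))
        = Real.exp (-γ) * (γ ^ N / N) := by
      rw [intervalIntegral.integral_const_mul, integral_pow]
      have hn : N - 1 + 1 = N := Nat.succ_pred_eq_of_pos hN
      have hc : ((N - 1 : ℕ) : ℝ) + 1 = N := by
        push_cast [Nat.cast_sub hN]; ring
      rw [hn, hc, zero_pow (by omega : N ≠ 0)]
      ring
    linarith [h2.le, h2.ge]
  have hJpos : ∀ γ ∈ Set.Ioi (0:ℝ), 0 < J γ := by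
    intro γ hγ
    have := hJge γ hγ
    have h0 : 0 < Real.exp (-γ) * (γ ^ N / N) := by
      have : (0:ℝ) < γ := hγ
      positivity
    linarith
  have hBpos : ∀ γ ∈ Set.Ioi (0:ℝ), 0 < B γ := by
    intro γ hγ
    have : Real.exp (-(a * γ)) < 1 := Real.exp_lt_one_iff.mpr (by
      have : (0:ℝ) < γ := hγ; nlinarith)
    simp only [hB_def]; linarith
  -- I tends to 1/N
  have hI : Tendsto (fun γ => J γ / γ ^ N) (nhdsWithin 0 (Set.Ioi 0)) (nhds (1 / N)) := by
    apply tendsto_of_tendsto_of_tendsto_of_le_of_le'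
      (g := fun γ => Real.exp (-γ) * (1 / N)) (h := fun _ => 1 / (N:ℝ))
    · have : Tendsto (fun γ : ℝ => Real.exp (-γ) * (1 / N)) (nhds 0)
          (nhds (Real.exp (-0) * (1 / N))) := by
        apply Tendsto.mul _ tendsto_const_nhds
        exact (Real.continuous_exp.comp continuous_neg).tendsto 0
      simpa using this.mono_left nhdsWithin_le_nhds
    · exact tendsto_const_nhds
    · filter_upwards [self_mem_nhdsWithin] with γ hγ
      have hγ0 : (0:ℝ) < γ := hγ
      have := hJge γ hγ
      rw [le_div_iff₀ (by positivity)]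
      calc Real.exp (-γ) * (1 / N) * γ ^ N = Real.exp (-γ) * (γ ^ N / N) := by ring
        _ ≤ J γ := this
    · filter_upwards [self_mem_nhdsWithin] with γ hγ
      have hγ0 : (0:ℝ) < γ := hγ
      have := hJle γ hγ
      rw [div_le_iff₀ (by positivity)]
      calc J γ ≤ γ ^ N / N := this
        _ = 1 / N * γ ^ N := by ring
  -- E tends to a
  have hE : Tendsto (fun γ => B γ / γ) (nhdsWithin 0 (Set.Ioi 0)) (nhds a) := by
    have hd : HasDerivAt B a 0 := by
      have h1 : HasDerivAt (fun x : ℝ => Real.exp (-(a * x))) (Real.exp (-(a * 0)) * (-a)) 0 := by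
        apply HasDerivAt.exp
        exact (by simpa using ((hasDerivAt_id (0:ℝ)).const_mul a).neg : HasDerivAt (-fun y : ℝ => a * y) (-a) 0)
      have h2 : HasDerivAt B (-(Real.exp (-(a * 0)) * (-a))) 0 := (h1.const_sub 1)
      simpa using h2
    have := hasDerivAt_iff_tendsto_slope.mp hd
    have h3 : Tendsto (slope B 0) (nhdsWithin 0 (Set.Ioi 0)) (nhds a) :=
      this.mono_left (nhdsWithin_mono 0 (fun x hx => by
        simp only [Set.mem_compl_iff, Set.mem_singleton_iff]
        exact ne_of_gt hx))
    apply h3.congr'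
    filter_upwards [self_mem_nhdsWithin] with γ hγ
    have : B 0 = 0 := by simp [hB_def]
    rw [slope_def_field, this]
    simp [div_eq_mul_inv, mul_comm]
  -- h tends to L
  set L : ℝ := C * (1 / N) * a ^ (M - 1) with hL_def
  have hL : 0 < L := by positivity
  set h : ℝ → ℝ := fun γ => C * (J γ / γ ^ N) * (B γ / γ) ^ (M - 1) with hh_def
  have hh : Tendsto h (nhdsWithin 0 (Set.Ioi 0)) (nhds L) := by
    exact (tendsto_const_nhds.mul hI).mul (hE.pow (M - 1))
  have hlogh : Tendsto (fun γ => Real.log (h γ)) (nhdsWithin 0 (Set.Ioi 0))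
      (nhds (Real.log L)) := hh.log (ne_of_gt hL)
  have hlogγ : Tendsto Real.log (nhdsWithin 0 (Set.Ioi 0)) atBot :=
    Real.tendsto_log_nhdsNE_zero.mono_left (nhdsWithin_mono 0 (fun x hx => by
      simp only [Set.mem_compl_iff, Set.mem_singleton_iff]
      exact ne_of_gt hx))
  have hquot : Tendsto (fun γ => Real.log (h γ) / Real.log γ)
      (nhdsWithin 0 (Set.Ioi 0)) (nhds 0) := by
    have : Tendsto (fun γ => Real.log (h γ) / -Real.log γ)
        (nhdsWithin 0 (Set.Ioi 0)) (nhds 0) :=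
      hlogh.div_atTop (tendsto_neg_atBot_atTop.comp hlogγ)
    have := this.neg
    simp only [neg_zero] at this
    apply this.congr
    intro γ; rw [div_neg, neg_neg]
  -- the cast
  have hcast : ((N + M - 1 : ℕ) : ℝ) = (N : ℝ) + M - 1 := by
    have : 1 ≤ N + M := le_trans hN (Nat.le_add_right N M)
    push_cast [Nat.cast_sub this]
    ring
  -- final combination
  have hfinal : Tendsto (fun γ => ((N + M - 1 : ℕ) : ℝ) + Real.log (h γ) / Real.log γ)
      (nhdsWithin 0 (Set.Ioi 0)) (nhds ((N : ℝ) + M - 1)) := by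
    rw [← hcast]
    simpa using (tendsto_const_nhds (x := ((N + M - 1 : ℕ) : ℝ))
      (f := nhdsWithin (0:ℝ) (Set.Ioi 0))).add hquot
  apply hfinal.congr'
  have hmem : Set.Ioo (0:ℝ) 1 ∈ nhdsWithin (0:ℝ) (Set.Ioi 0) := by
    apply inter_mem_nhdsWithin
    exact Iio_mem_nhds one_pos
  filter_upwards [hmem] with γ hγ
  obtain ⟨hγ0, hγ1⟩ := hγ
  have hγmem : γ ∈ Set.Ioi (0:ℝ) := hγ0
  have hlogneg : Real.log γ < 0 := Real.log_neg hγ0 hγ1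
  have hlogne : Real.log γ ≠ 0 := ne_of_lt hlogneg
  have hfeq : C * (J γ) * (B γ) ^ (M - 1) = γ ^ (N + M - 1) * h γ := by
    have hpow : γ ^ (N + M - 1) = γ ^ N * γ ^ (M - 1) := by
      rw [← pow_add]
      congr 1
      omega
    rw [hpow, hh_def]
    have h1 : γ ^ N * (J γ / γ ^ N) = J γ := by
      field_simp
    have h2 : (γ * (B γ / γ)) = B γ := by field_simp
    calc C * J γ * B γ ^ (M-1)
        = (γ ^ N * (J γ / γ ^ N)) * C * ((γ * (B γ / γ)) ^ (M-1)) := by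
          rw [h1, h2]; ring
      _ = γ ^ N * γ ^ (M - 1) * (C * (J γ / γ ^ N) * (B γ / γ) ^ (M - 1)) := by
          rw [mul_pow]; ring
  have hhpos : 0 < h γ := by
    rw [hh_def]
    have := hJpos γ hγmem
    have := hBpos γ hγmem
    positivity
  have hlogf : Real.log (C * J γ * B γ ^ (M - 1))
      = ((N + M - 1 : ℕ) : ℝ) * Real.log γ + Real.log (h γ) := by
    rw [hfeq, Real.log_mul (by positivity) (ne_of_gt hhpos), Real.log_pow]
  show ((N + M - 1 : ℕ) : ℝ) + Real.log (h γ) / Real.log γ = _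
  simp only [harg γ]
  rw [hlogf, add_div, mul_div_cancel_right₀ _ hlogne]
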